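/- Suppose G = (V,E) is a finite graph with n vertices and tree rank t. Then G contains a complete or independent set of size at least (1/4) · (n/t)^{1/(t+1)}. -/

import Mathlib

variable {V : Type*}

def TypeTreeAdj (G : SimpleGraph V) (A : Set (List Bool)) (a : List Bool → V) : Prop :=
  ∀ η ∈ A, ∀ (η' : List Bool) (b : Bool), (η' ++ [b]) <+: η → (G.Adj (a η) (a η') ↔ b = true)

def IsTypeTree (G : SimpleGraph V) (A : Set (List Bool)) (a : List Bool → V) : Prop :=
  Set.InjOn a A ∧ (∀ v : V, ∃ η ∈ A, a η = v) ∧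
    (∀ η ∈ A, ∀ η', η' <+: η → η' ∈ A) ∧ TypeTreeAdj G A a

def GraphIndep (G : SimpleGraph V) (S : Set V) : Prop :=
  S.Pairwise fun x y => ¬ G.Adj x y

def IsFullTypeTree (G : SimpleGraph V) (t : ℕ) (a : List Bool → V) : Prop :=
  Set.InjOn a {η : List Bool | η.length < t} ∧
    TypeTreeAdj G {η : List Bool | η.length < t} a

section Aux
variable [Fintype V] [Nonempty V]

noncomputable def pick (s : Finset V) : V :=
  if h : s.Nonempty then h.choose else Classical.arbitrary V

lemma pick_mem {s : Finset V} (h : s.Nonempty) : pick s ∈ s := by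
  rw [pick, dif_pos h]; exact h.choose_spec

variable (G : SimpleGraph V)

open Classical in
noncomputable def SS : List Bool → Finset V
  | [] => Finset.univ
  | true :: η => (SS η).filter (fun w => G.Adj (pick (SS η)) w)
  | false :: η => (SS η).filter (fun w => ¬ G.Adj (pick (SS η)) w ∧ w ≠ pick (SS η))

lemma mem_SS_cons {v : V} {b : Bool} {η : List Bool} :
    v ∈ SS G (b :: η) ↔ v ∈ SS G η ∧ v ≠ pick (SS G η) ∧
      (G.Adj (pick (SS G η)) v ↔ b = true) := by
  classical
  cases b
  · simp only [SS, Finset.mem_filter]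
    constructor
    · rintro ⟨h1, h2, h3⟩; exact ⟨h1, h3, by simp [h2]⟩
    · rintro ⟨h1, h2, h3⟩; exact ⟨h1, by simp at h3; exact h3, h2⟩
  · simp only [SS, Finset.mem_filter]
    constructor
    · rintro ⟨h1, h2⟩; exact ⟨h1, (G.ne_of_adj h2).symm, by simp [h2]⟩
    · rintro ⟨h1, h2, h3⟩; exact ⟨h1, h3.mpr (by trivial)⟩

lemma SS_subset_of_append {v : V} : ∀ {μ η : List Bool}, v ∈ SS G (μ ++ η) → v ∈ SS G η := by
  intro μ
  induction μ with
  | nil => intro η h; exact h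
  | cons b μ ih =>
    intro η h
    exact ih (((mem_SS_cons G).1 h).1)

lemma card_SS_cons {η : List Bool} (h : (SS G η).Nonempty) :
    (SS G η).card = 1 + (SS G (false :: η)).card + (SS G (true :: η)).card := by
  classical
  set s := SS G η with hs
  set p := pick s with hp
  have key : (s.filter (fun w => G.Adj p w)).card
      + (s.filter (fun w => ¬ G.Adj p w)).card = s.card :=
    Finset.card_filter_add_card_filter_not _
  have hfe : SS G (false :: η) = (s.filter (fun w => ¬ G.Adj p w)).erase p := by
    ext x
    simp only [Finset.mem_erase, Finset.mem_filter]
    rw [mem_SS_cons]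
    constructor
    · rintro ⟨h1, h2, h3⟩; exact ⟨h2, h1, by simpa using h3⟩
    · rintro ⟨h1, h2, h3⟩; exact ⟨h2, h1, by simpa using h3⟩
  have hte : SS G (true :: η) = s.filter (fun w => G.Adj p w) := by
    ext x
    simp only [Finset.mem_filter]
    rw [mem_SS_cons]
    constructor
    · rintro ⟨h1, h2, h3⟩; exact ⟨h1, h3.mpr (by trivial)⟩
    · rintro ⟨h1, h2⟩; exact ⟨h1, (G.ne_of_adj h2).symm, by simpa using h2⟩
  have hpmem : p ∈ s.filter (fun w => ¬ G.Adj p w) :=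
    Finset.mem_filter.2 ⟨pick_mem h, G.irrefl⟩
  have h1 : 1 ≤ (s.filter (fun w => ¬ G.Adj p w)).card := Finset.card_pos.2 ⟨p, hpmem⟩
  rw [hfe, hte, Finset.card_erase_of_mem hpmem]
  omega

lemma card_SS_add_length_le {η : List Bool} (h : (SS G η).Nonempty) :
    (SS G η).card + η.length ≤ Fintype.card V := by
  induction η with
  | nil => simp [SS]
  | cons b η ih =>
    have hpar : (SS G η).Nonempty := by
      obtain ⟨v, hv⟩ := h
      exact ⟨v, ((mem_SS_cons G).1 hv).1⟩
    have := card_SS_cons G hpar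
    have := ih hpar
    cases b <;> simp only [List.length_cons] <;> omega


open Classical in
noncomputable def EE : ℕ → List Bool → ℕ
  | 0, η => if (SS G η).Nonempty then 1 else 0
  | (h+1), η =>
      if (SS G η).Nonempty then
        max (max (EE h (false :: η)) (EE h (true :: η)))
          (1 + min (EE h (false :: η)) (EE h (true :: η)))
      else 0

lemma SS_nonempty_of_EE_pos {h : ℕ} {η : List Bool} (hp : 1 ≤ EE G h η) :
    (SS G η).Nonempty := by
  classical
  by_contra hne
  cases h <;> simp [EE, hne] at hp

lemma tr_pow_add_pow_le_aux {x a b : ℕ} (hx : 2 ≤ x) (hab : a ≤ b) :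
    x ^ a + x ^ b ≤ (x + 1) ^ (max b (a + 1)) := by
  set E := max b (a+1) with hE
  obtain ⟨E', hE'⟩ : ∃ E', E = E' + 1 := by
    refine ⟨E - 1, ?_⟩
    have : 1 ≤ E := le_trans (by omega) (le_max_right _ _)
    omega
  have ha' : a ≤ E' := by have := le_max_right b (a+1); omega
  have hb' : b ≤ E' + 1 := by have := le_max_left b (a+1); omega
  have hx1 : 1 ≤ x := by omega
  calc x ^ a + x ^ b ≤ x ^ E' + x ^ (E' + 1) :=
        Nat.add_le_add (Nat.pow_le_pow_right hx1 ha') (Nat.pow_le_pow_right hx1 hb')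
    _ = x ^ E' * (1 + x) := by ring
    _ ≤ (x + 1) ^ E' * (1 + x) :=
        Nat.mul_le_mul_right _ (Nat.pow_le_pow_left (by omega) _)
    _ = (x + 1) ^ (E' + 1) := by ring
    _ = (x + 1) ^ E := by rw [hE']

lemma tr_pow_add_pow_le {x a b : ℕ} (hx : 2 ≤ x) :
    x ^ a + x ^ b ≤ (x + 1) ^ (max (max a b) (1 + min a b)) := by
  rcases le_total a b with hab | hab
  · have := tr_pow_add_pow_le_aux hx hab
    rw [max_eq_right hab, min_eq_left hab, add_comm 1 a]
    exact this
  · have := tr_pow_add_pow_le_aux hx hab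
    rw [max_eq_left hab, min_eq_right hab, add_comm 1 b]
    omega

lemma count : ∀ (h : ℕ) (η : List Bool),
    (∀ (μ : List Bool) (b : Bool), μ.length = h → SS G (b :: (μ ++ η)) = ∅) →
    (SS G η).card + 1 ≤ (h + 2) ^ (EE G h η) := by
  classical
  intro h
  induction h with
  | zero =>
    intro η hyp
    by_cases hne : (SS G η).Nonempty
    · have hc := card_SS_cons G hne
      have h0 := hyp [] false rfl
      have h1 := hyp [] true rfl
      simp only [List.nil_append] at h0 h1
      rw [h0, h1] at hc
      simp only [Finset.card_empty] at hc
      simp [EE, hne]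
      omega
    · simp [EE, hne, Finset.not_nonempty_iff_eq_empty.1 hne]
  | succ h ih =>
    intro η hyp
    by_cases hne : (SS G η).Nonempty
    · have hyp' : ∀ (c : Bool) (μ : List Bool) (b : Bool), μ.length = h →
          SS G (b :: (μ ++ (c :: η))) = ∅ := by
        intro c μ b hlen
        have := hyp (μ ++ [c]) b (by simp [hlen])
        rwa [List.append_assoc, List.singleton_append] at this
      have c0 := ih (false :: η) (hyp' false)
      have c1 := ih (true :: η) (hyp' true)
      have hcard := card_SS_cons G hne
      have hEE : EE G (h+1) η =
          max (max (EE G h (false :: η)) (EE G h (true :: η)))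
            (1 + min (EE G h (false :: η)) (EE G h (true :: η))) := by
        simp [EE, hne]
      rw [hEE]
      have key := tr_pow_add_pow_le (x := h + 2) (a := EE G h (false :: η))
        (b := EE G h (true :: η)) (by omega)
      rw [show h + 2 + 1 = h + 1 + 2 by omega] at key
      omega
    · simp [EE, hne, Finset.not_nonempty_iff_eq_empty.1 hne]


lemma embed_zero (η : List Bool) :
    ∃ a : List Bool → V, (∀ μ : List Bool, μ.length < 0 → a μ ∈ SS G η) ∧
      IsFullTypeTree G 0 a := by
  refine ⟨fun _ => Classical.arbitrary V, fun μ hμ => absurd hμ (by omega), ?_, ?_⟩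
  · intro x hx; exact absurd hx (by simp)
  · intro μ hμ; exact absurd hμ (by simp)

lemma embed_one {η : List Bool} (hne : (SS G η).Nonempty) :
    ∃ a : List Bool → V, (∀ μ : List Bool, μ.length < 1 → a μ ∈ SS G η) ∧
      IsFullTypeTree G 1 a := by
  refine ⟨fun _ => pick (SS G η), fun μ _ => pick_mem hne, ?_, ?_⟩
  · intro x hx y hy _
    have hx' : x = [] := List.eq_nil_of_length_eq_zero (by simpa using hx)
    have hy' : y = [] := List.eq_nil_of_length_eq_zero (by simpa using hy)
    rw [hx', hy']
  · intro μ hμ μ' b hpre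
    have hμ' : μ = [] := List.eq_nil_of_length_eq_zero (by simpa using hμ)
    subst hμ'
    have := hpre.length_le
    simp at this

lemma embed : ∀ (h : ℕ) (η : List Bool) (d : ℕ), d ≤ EE G h η →
    ∃ a : List Bool → V, (∀ μ : List Bool, μ.length < d → a μ ∈ SS G η) ∧
      IsFullTypeTree G d a := by
  intro h
  induction h with
  | zero =>
    intro η d hd
    rcases Nat.eq_zero_or_pos d with rfl | hd1
    · exact embed_zero G η
    · have hne : (SS G η).Nonempty := SS_nonempty_of_EE_pos G (le_trans hd1 hd)
      have hEE : EE G 0 η = 1 := by classical simp [EE, hne]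
      rw [hEE] at hd
      interval_cases d
      exact embed_one G hne
  | succ h ih =>
    intro η d hd
    rcases Nat.eq_zero_or_pos d with rfl | hd1
    · exact embed_zero G η
    obtain ⟨d', rfl⟩ : ∃ d', d = d' + 1 := ⟨d - 1, by omega⟩
    have hne : (SS G η).Nonempty := SS_nonempty_of_EE_pos G (le_trans hd1 hd)
    have hEE : EE G (h+1) η =
        max (max (EE G h (false :: η)) (EE G h (true :: η)))
          (1 + min (EE G h (false :: η)) (EE G h (true :: η))) := by
      classical simp [EE, hne]
    rw [hEE] at hd
    by_cases h0 : d' + 1 ≤ EE G h (false :: η)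
    · obtain ⟨a, ha, hfull⟩ := ih (false :: η) (d' + 1) h0
      exact ⟨a, fun μ hμ => ((mem_SS_cons G).1 (ha μ hμ)).1, hfull⟩
    by_cases h1 : d' + 1 ≤ EE G h (true :: η)
    · obtain ⟨a, ha, hfull⟩ := ih (true :: η) (d' + 1) h1
      exact ⟨a, fun μ hμ => ((mem_SS_cons G).1 (ha μ hμ)).1, hfull⟩
    have hd0 : d' ≤ EE G h (false :: η) := by omega
    have hd1' : d' ≤ EE G h (true :: η) := by omega
    obtain ⟨a0, ha0, hinj0, hadj0⟩ := ih (false :: η) d' hd0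
    obtain ⟨a1, ha1, hinj1, hadj1⟩ := ih (true :: η) d' hd1'
    set p := pick (SS G η) with hp
    refine ⟨fun μ => match μ with
      | [] => p
      | false :: ν => a0 ν
      | true :: ν => a1 ν, ?_, ?_, ?_⟩
    · intro μ hμ
      match μ with
      | [] => exact pick_mem hne
      | false :: ν =>
        exact ((mem_SS_cons G).1 (ha0 ν (by simpa using hμ))).1
      | true :: ν =>
        exact ((mem_SS_cons G).1 (ha1 ν (by simpa using hμ))).1
    · -- injectivity
      intro x hx y hy hxy
      have hx' : x.length < d' + 1 := hx
      have hy' : y.length < d' + 1 := hy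
      match x, y with
      | [], [] => rfl
      | [], b :: ν =>
        exfalso
        cases b
        · have := ((mem_SS_cons G).1 (ha0 ν (by simpa using hy'))).2.1
          simp only at hxy
          exact this hxy.symm
        · have := ((mem_SS_cons G).1 (ha1 ν (by simpa using hy'))).2.1
          simp only at hxy
          exact this hxy.symm
      | b :: ν, [] =>
        exfalso
        cases b
        · have := ((mem_SS_cons G).1 (ha0 ν (by simpa using hx'))).2.1
          simp only at hxy
          exact this hxy
        · have := ((mem_SS_cons G).1 (ha1 ν (by simpa using hx'))).2.1
          simp only at hxy
          exact this hxy
      | false :: ν, false :: ν' =>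
        have := hinj0 (by simpa using hx') (by simpa using hy') hxy
        rw [this]
      | true :: ν, true :: ν' =>
        have := hinj1 (by simpa using hx') (by simpa using hy') hxy
        rw [this]
      | false :: ν, true :: ν' =>
        exfalso
        have hA0 := ((mem_SS_cons G).1 (ha0 ν (by simpa using hx'))).2.2
        have hA1 := ((mem_SS_cons G).1 (ha1 ν' (by simpa using hy'))).2.2
        simp only at hxy
        rw [hxy] at hA0
        simp at hA0 hA1
        exact hA0 hA1
      | true :: ν, false :: ν' =>
        exfalso
        have hA1 := ((mem_SS_cons G).1 (ha1 ν (by simpa using hx'))).2.2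
        have hA0 := ((mem_SS_cons G).1 (ha0 ν' (by simpa using hy'))).2.2
        simp only at hxy
        rw [hxy] at hA1
        simp at hA0 hA1
        exact hA0 hA1
    · -- TypeTreeAdj
      intro μ hμ μ' b hpre
      match μ with
      | [] =>
        exfalso
        have := hpre.length_le
        simp at this
      | c :: ν =>
        have hν : ν.length < d' := by simpa using hμ
        match μ' with
        | [] =>
          rw [List.nil_append] at hpre
          have hbc : b = c := (List.cons_prefix_cons.1 hpre).1
          subst hbc
          cases b
          · have hA0 := ((mem_SS_cons G).1 (ha0 ν hν)).2.2
            exact (G.adj_comm _ _).trans hA0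
          · have hA1 := ((mem_SS_cons G).1 (ha1 ν hν)).2.2
            exact (G.adj_comm _ _).trans hA1
        | c' :: ν' =>
          rw [List.cons_append] at hpre
          obtain ⟨rfl, hpre'⟩ := List.cons_prefix_cons.1 hpre
          cases c'
          · exact hadj0 ν hν ν' b hpre'
          · exact hadj1 ν hν ν' b hpre'


lemma SS_drop_nonempty {L : List Bool} (hL : (SS G L).Nonempty) (k : ℕ) :
    (SS G (L.drop k)).Nonempty := by
  obtain ⟨v, hv⟩ := hL
  rw [← List.take_append_drop k L] at hv
  exact ⟨v, SS_subset_of_append G hv⟩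

lemma SS_drop_le {L : List Bool} {k m : ℕ} (hkm : k ≤ m) {v : V}
    (hv : v ∈ SS G (L.drop k)) : v ∈ SS G (L.drop m) := by
  have h1 : (L.drop k).drop (m - k) = L.drop m := by
    rw [List.drop_drop]; congr 1; omega
  have h2 : (L.drop k).take (m - k) ++ L.drop m = L.drop k := by
    rw [← h1]; exact List.take_append_drop _ _
  rw [← h2] at hv
  exact SS_subset_of_append G hv

end Aux

set_option maxHeartbeats 1000000 in
theorem statement6 [Fintype V] (G : SimpleGraph V) (n t : ℕ)
    (hn : n = Fintype.card V)
    (htrank1 : ∃ a : List Bool → V, IsFullTypeTree G t a)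
    (htrank2 : ∀ (t' : ℕ) (a : List Bool → V), IsFullTypeTree G t' a → t' ≤ t) :
    ∃ S : Finset V, (G.IsClique (↑S : Set V) ∨ GraphIndep G (↑S : Set V)) ∧
      ((1 : ℝ) / 4) * (((n : ℝ) / (t : ℝ)) ^ ((1 : ℝ) / ((t : ℝ) + 1))) ≤ (S.card : ℝ) := by
  classical
  obtain ⟨a₀, _⟩ := htrank1
  haveI : Nonempty V := ⟨a₀ []⟩
  have ht1 : 1 ≤ t := by
    refine htrank2 1 (fun _ => a₀ []) ⟨?_, ?_⟩
    · intro x hx y hy _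
      have hx' : x = [] := List.eq_nil_of_length_eq_zero (by simpa using hx)
      have hy' : y = [] := List.eq_nil_of_length_eq_zero (by simpa using hy)
      rw [hx', hy']
    · intro μ hμ μ' b hpre
      have hμ' : μ = [] := List.eq_nil_of_length_eq_zero (by simpa using hμ)
      subst hμ'
      have := hpre.length_le
      simp at this
  have hn1 : 1 ≤ n := by rw [hn]; exact Fintype.card_pos
  set P : ℕ → Prop := fun h => ∃ η : List Bool, η.length = h ∧ (SS G η).Nonempty with hP
  have hP0 : P 0 := ⟨[], rfl, by simp [SS]⟩
  have hPbound : ∀ h, P h → h < n := by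
    rintro h ⟨η, hlen, hne⟩
    have h1 := card_SS_add_length_le G hne
    have h2 : 1 ≤ (SS G η).card := Finset.card_pos.2 hne
    rw [← hn] at h1
    omega
  set hm := Nat.findGreatest P n with hhm
  have hPh : P hm := Nat.findGreatest_spec (Nat.zero_le n) hP0
  have hmax : ∀ h, hm < h → ¬ P h := by
    intro h hh
    by_cases hhn : h ≤ n
    · exact Nat.findGreatest_is_greatest hh hhn
    · intro hp; exact absurd (hPbound h hp) (by omega)
  obtain ⟨L, hLlen, hLne⟩ := hPh
  have hEEle : EE G hm [] ≤ t := by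
    by_contra hc
    obtain ⟨a, _, hfull⟩ := embed G hm [] (t + 1) (by omega)
    have := htrank2 (t + 1) a hfull
    omega
  have hcount : n + 1 ≤ (hm + 2) ^ t := by
    have hyp : ∀ (μ : List Bool) (b : Bool), μ.length = hm → SS G (b :: (μ ++ [])) = ∅ := by
      intro μ b hlen
      by_contra hne'
      have : P (hm + 1) := ⟨b :: (μ ++ []), by simp [hlen], Finset.nonempty_iff_ne_empty.2 hne'⟩
      exact hmax _ (by omega) this
    have hcnt := count G hm [] hyp
    have hcardu : (SS G ([] : List Bool)).card = n := by simp [SS, hn]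
    calc n + 1 = (SS G ([] : List Bool)).card + 1 := by rw [hcardu]
      _ ≤ (hm + 2) ^ (EE G hm []) := hcnt
      _ ≤ (hm + 2) ^ t := Nat.pow_le_pow_right (by omega) hEEle
  -- path vertices
  set w : ℕ → V := fun k => pick (SS G (L.drop k)) with hw
  set c : ℕ → Bool := fun j => L.getD j false with hc
  have hkey : ∀ j k, k ≤ j → j < L.length → w k ∈ SS G (c j :: L.drop (j + 1)) := by
    intro j k hkj hj
    have h1 : w k ∈ SS G (L.drop j) :=
      SS_drop_le G hkj (pick_mem (SS_drop_nonempty G hLne k))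
    rw [List.drop_eq_getElem_cons hj] at h1
    have : c j = L[j] := List.getD_eq_getElem L false hj
    rwa [this]
  have hadj : ∀ j k, k ≤ j → j < L.length →
      (G.Adj (w (j + 1)) (w k) ↔ c j = true) := by
    intro j k hkj hj
    exact ((mem_SS_cons G).1 (hkey j k hkj hj)).2.2
  have hne : ∀ j k, k ≤ j → j < L.length → w k ≠ w (j + 1) := by
    intro j k hkj hj
    exact ((mem_SS_cons G).1 (hkey j k hkj hj)).2.1
  set K : Bool → Finset V := fun b =>
    ((Finset.range L.length).filter (fun j => c j = b)).image (fun j => w (j + 1)) ∪ {w 0}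
      with hK
  have hmemK : ∀ (b : Bool) (x : V), x ∈ K b ↔
      (∃ j, j < L.length ∧ c j = b ∧ w (j + 1) = x) ∨ x = w 0 := by
    intro b x
    rw [or_comm]
    simp [hK, Finset.mem_union, Finset.mem_image, Finset.mem_filter, Finset.mem_range,
      and_assoc]
  have hcardK : ∀ b, (K b).card =
      ((Finset.range L.length).filter (fun j => c j = b)).card + 1 := by
    intro b
    rw [hK]
    have hdisj : Disjoint
        (((Finset.range L.length).filter (fun j => c j = b)).image (fun j => w (j + 1)))
        ({w 0} : Finset V) := by
      simp only [Finset.disjoint_singleton_right, Finset.mem_image, Finset.mem_filter,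
        Finset.mem_range, not_exists]
      rintro j ⟨⟨hj, _⟩, hwj⟩
      exact hne j 0 (Nat.zero_le j) hj hwj.symm
    rw [Finset.card_union_of_disjoint hdisj, Finset.card_singleton,
      Finset.card_image_of_injOn]
    intro j hj k hk hjk
    simp only [Finset.coe_filter, Finset.mem_range, Set.mem_setOf_eq] at hj hk
    rcases lt_trichotomy j k with h | h | h
    · exact absurd hjk (hne k (j + 1) (by omega) hk.1)
    · exact h
    · exact absurd hjk.symm (hne j (k + 1) (by omega) hj.1)
  have hsum : (K true).card + (K false).card = L.length + 2 := by
    rw [hcardK true, hcardK false]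
    have := Finset.card_filter_add_card_filter_not
      (s := Finset.range L.length) (p := fun j => c j = true)
    have heq : (Finset.range L.length).filter (fun j => ¬ c j = true)
        = (Finset.range L.length).filter (fun j => c j = false) := by
      apply Finset.filter_congr
      intro j _
      simp
    rw [heq] at this
    rw [Finset.card_range] at this
    omega
  have hclique : G.IsClique (↑(K true) : Set V) := by
    intro x hx y hy hxy
    rw [Finset.mem_coe, hmemK] at hx hy
    rcases hx with ⟨j, hj, hcj, hwj⟩ | rfl
    · rcases hy with ⟨k, hk, hck, hwk⟩ | rfl
      · subst hwj; subst hwk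
        rcases lt_trichotomy j k with h | h | h
        · exact G.adj_symm ((hadj k (j + 1) (by omega) hk).2 hck)
        · exact absurd (by rw [h]) hxy
        · exact (hadj j (k + 1) (by omega) hj).2 hcj
      · subst hwj
        exact (hadj j 0 (Nat.zero_le j) hj).2 hcj
    · rcases hy with ⟨k, hk, hck, hwk⟩ | rfl
      · subst hwk
        exact G.adj_symm ((hadj k 0 (Nat.zero_le k) hk).2 hck)
      · exact absurd rfl hxy
  have hindep : GraphIndep G (↑(K false) : Set V) := by
    intro x hx y hy hxy
    rw [Finset.mem_coe, hmemK] at hx hy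
    rcases hx with ⟨j, hj, hcj, hwj⟩ | rfl
    · rcases hy with ⟨k, hk, hck, hwk⟩ | rfl
      · subst hwj; subst hwk
        rcases lt_trichotomy j k with h | h | h
        · intro hadj'
          have := (hadj k (j + 1) (by omega) hk).1 (G.adj_symm hadj')
          rw [hck] at this; exact absurd this (by simp)
        · exact absurd (by rw [h]) hxy
        · intro hadj'
          have := (hadj j (k + 1) (by omega) hj).1 hadj'
          rw [hcj] at this; exact absurd this (by simp)
      · subst hwj
        intro hadj'
        have := (hadj j 0 (Nat.zero_le j) hj).1 hadj'
        rw [hcj] at this; exact absurd this (by simp)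
    · rcases hy with ⟨k, hk, hck, hwk⟩ | rfl
      · subst hwk
        intro hadj'
        have := (hadj k 0 (Nat.zero_le k) hk).1 (G.adj_symm hadj')
        rw [hck] at this; exact absurd this (by simp)
      · exact absurd rfl hxy
  -- choose the bigger
  obtain ⟨S, hSprop, hScard⟩ :
      ∃ S : Finset V, (G.IsClique (↑S : Set V) ∨ GraphIndep G (↑S : Set V)) ∧
        L.length + 2 ≤ 2 * S.card := by
    rcases le_total (K true).card (K false).card with h | h
    · exact ⟨K false, Or.inr hindep, by omega⟩
    · exact ⟨K true, Or.inl hclique, by omega⟩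
  refine ⟨S, hSprop, ?_⟩
  set M := S.card with hM
  have hM1 : 1 ≤ M := by
    have := hcardK true
    have := hcardK false
    omega
  have hnat : n ≤ (2 * M) ^ t := by
    have h1 : (hm + 2) ^ t ≤ (2 * M) ^ t := Nat.pow_le_pow_left (by omega) t
    omega
  -- real arithmetic
  have ht0 : (0 : ℝ) < (t : ℝ) := by exact_mod_cast ht1
  have hmpos : (1 : ℝ) ≤ 2 * (M : ℝ) := by
    have : (1 : ℝ) ≤ (M : ℝ) := by exact_mod_cast hM1
    linarith
  have hstep1 : (n : ℝ) / (t : ℝ) ≤ ((2 * M : ℕ) : ℝ) ^ ((t : ℕ) : ℝ) := by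
    rw [Real.rpow_natCast]
    calc (n : ℝ) / (t : ℝ) ≤ (n : ℝ) := by
          apply div_le_self (by positivity)
          exact_mod_cast ht1
      _ ≤ (((2 * M) ^ t : ℕ) : ℝ) := by exact_mod_cast hnat
      _ = ((2 * M : ℕ) : ℝ) ^ t := by push_cast; ring
  have hstep2 : ((n : ℝ) / (t : ℝ)) ^ ((1 : ℝ) / ((t : ℝ) + 1)) ≤ 2 * (M : ℝ) := by
    calc ((n : ℝ) / (t : ℝ)) ^ ((1 : ℝ) / ((t : ℝ) + 1))
        ≤ (((2 * M : ℕ) : ℝ) ^ ((t : ℕ) : ℝ)) ^ ((1 : ℝ) / ((t : ℝ) + 1)) := by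
          apply Real.rpow_le_rpow (by positivity) hstep1 (by positivity)
      _ = ((2 * M : ℕ) : ℝ) ^ (((t : ℕ) : ℝ) * ((1 : ℝ) / ((t : ℝ) + 1))) := by
          rw [← Real.rpow_mul (by positivity)]
      _ ≤ ((2 * M : ℕ) : ℝ) ^ (1 : ℝ) := by
          apply Real.rpow_le_rpow_of_exponent_le
          · push_cast; exact hmpos
          · rw [mul_one_div, div_le_one (by positivity)]
            push_cast; linarith
      _ = 2 * (M : ℝ) := by rw [Real.rpow_one]; push_cast; ring
  calc (1 : ℝ) / 4 * (((n : ℝ) / (t : ℝ)) ^ ((1 : ℝ) / ((t : ℝ) + 1)))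
      ≤ (1 : ℝ) / 4 * (2 * (M : ℝ)) := by
        apply mul_le_mul_of_nonneg_left hstep2 (by norm_num)
    _ ≤ (M : ℝ) := by
        have : (1 : ℝ) ≤ (M : ℝ) := by exact_mod_cast hM1
        linarith
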